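/- Consider the two-layer LISTA network with parameters w = (W₁¹, W₂¹, W₁², W₂²) ∈ ℝ^{m×n} × ℝ^{m×m} × ℝ^{m×n} × ℝ^{m×m}: x̃¹ = (1/√n) W₁¹ y + (1/√m) W₂¹ x⁰, x¹ = σ(x̃¹), x̃² = (1/√n) W₁² y + (1/√m) W₂² x¹, and output coordinate f_s = (1/√m) σ(x̃²_s), where σ : ℝ → ℝ is differentiable with |σ'(a)| ≤ L_σ for all a and σ(0) = 0. Write L̂ = L_σ/√m, ŷ = ‖y‖²/n, x̂ = ‖x⁰‖²/m. Then the squared Euclidean norm of the gradient of f_s with respect to all parameters satisfies ‖∇_w f_s‖² ≤ L̂²(ŷ + L̂² ‖x̃¹‖²) + L̂⁴ (ŷ + x̂) ‖v_sᵀ W₂²‖², where v_s ∈ ℝ^m is the s-th standard basis vector. Consequently, for T training samples containing y as the first input, the minimum eigenvalue of the tangent kernel matrix K(w) is bounded above by the same quantity. -/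

import Mathlib

open scoped BigOperators Matrix

/-- Index type for the parameters `(W₁¹, W₂¹, W₁², W₂²)` of a two-layer LISTA
network. -/
abbrev ListaIdx (m n : ℕ) :=
  (Fin m × Fin n) ⊕ (Fin m × Fin m) ⊕ (Fin m × Fin n) ⊕ (Fin m × Fin m)

/-- The tangent kernel matrix `K(w) = J(w) J(w)ᵀ` of a map
`F : ℝ^P → ℝ^{m×T}`, where `J(w)` is the Jacobian of `w ↦ vec (F w)`. -/
noncomputable def tangentKernel {ι κ : Type*} [Fintype ι] [DecidableEq ι] [Fintype κ]
    (F : EuclideanSpace ℝ ι → EuclideanSpace ℝ κ)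
    (w : EuclideanSpace ℝ ι) : Matrix κ κ ℝ :=
  (Matrix.of fun a p => fderiv ℝ F w (EuclideanSpace.single p 1) a) *
    (Matrix.of fun a p => fderiv ℝ F w (EuclideanSpace.single p 1) a)ᵀ

lemma inf_eig_le_diag {κ : Type*} [Fintype κ] [DecidableEq κ] [Nonempty κ]
    {A : Matrix κ κ ℝ} (hA : A.IsHermitian) (a : κ) :
    ⨅ i, hA.eigenvalues i ≤ A a a := by
  have hspec := hA.spectral_theorem
  set U : Matrix κ κ ℝ := (Matrix.IsHermitian.eigenvectorUnitary hA : Matrix κ κ ℝ) with hU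
  have hAaa : A a a = ∑ t, hA.eigenvalues t * (U a t)^2 := by
    nth_rewrite 1 [hspec]
    simp [Matrix.mul_apply, Matrix.star_apply, Matrix.diagonal_apply, Finset.sum_mul]
    congr 1; funext t; rw [hU, Matrix.IsHermitian.eigenvectorUnitary_apply]; ring
  have hone : ∑ t, (U a t)^2 = 1 := by
    have h1 : U * star U = 1 :=
      (Matrix.mem_unitaryGroup_iff).mp (Matrix.IsHermitian.eigenvectorUnitary hA).2
    have := congrFun (congrFun h1 a) a
    simpa [Matrix.mul_apply, Matrix.star_apply, Matrix.one_apply, pow_two] using this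
  have hbdd : BddBelow (Set.range hA.eigenvalues) := (Set.finite_range _).bddBelow
  have hle : ∀ t, ⨅ i, hA.eigenvalues i ≤ hA.eigenvalues t := fun t => ciInf_le hbdd t
  calc ⨅ i, hA.eigenvalues i = ∑ t, (⨅ i, hA.eigenvalues i) * (U a t)^2 := by
        rw [← Finset.mul_sum, hone, mul_one]
      _ ≤ A a a := by
        rw [hAaa]
        exact Finset.sum_le_sum fun t _ => mul_le_mul_of_nonneg_right (hle t) (sq_nonneg _)


variable {m n : ℕ}

/-- value of x̃¹_j -/
noncomputable def t1val (m n : ℕ) (yv : EuclideanSpace ℝ (Fin n)) (x0 : EuclideanSpace ℝ (Fin m))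
    (u : EuclideanSpace ℝ (ListaIdx m n)) (j : Fin m) : ℝ :=
  (Real.sqrt n)⁻¹ * ∑ k, u (Sum.inl (j, k)) * yv k
    + (Real.sqrt m)⁻¹ * ∑ k, u (Sum.inr (Sum.inl (j, k))) * x0 k

noncomputable def t2val (m n : ℕ) (σ : ℝ → ℝ) (yv : EuclideanSpace ℝ (Fin n))
    (x0 : EuclideanSpace ℝ (Fin m)) (u : EuclideanSpace ℝ (ListaIdx m n)) (s : Fin m) : ℝ :=
  (Real.sqrt n)⁻¹ * ∑ k, u (Sum.inr (Sum.inr (Sum.inl (s, k)))) * yv k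
    + (Real.sqrt m)⁻¹ * ∑ j, u (Sum.inr (Sum.inr (Sum.inr (s, j)))) * σ (t1val m n yv x0 u j)

noncomputable def lin1 (m n : ℕ) (yv : EuclideanSpace ℝ (Fin n))
    (x0 : EuclideanSpace ℝ (Fin m)) (j : Fin m) :
    EuclideanSpace ℝ (ListaIdx m n) →L[ℝ] ℝ :=
  (Real.sqrt n)⁻¹ • ∑ k, yv k • EuclideanSpace.proj (𝕜 := ℝ) (Sum.inl (j, k) : ListaIdx m n)
    + (Real.sqrt m)⁻¹ •
        ∑ k, x0 k • EuclideanSpace.proj (𝕜 := ℝ) (Sum.inr (Sum.inl (j, k)) : ListaIdx m n)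

noncomputable def listaDeriv (m n : ℕ) (σ : ℝ → ℝ) (yv : EuclideanSpace ℝ (Fin n))
    (x0 : EuclideanSpace ℝ (Fin m)) (s : Fin m) (w : EuclideanSpace ℝ (ListaIdx m n)) :
    EuclideanSpace ℝ (ListaIdx m n) →L[ℝ] ℝ :=
  (Real.sqrt m)⁻¹ • (deriv σ (t2val m n σ yv x0 w s) •
    ((Real.sqrt n)⁻¹ •
        ∑ k, yv k • EuclideanSpace.proj (𝕜 := ℝ) (Sum.inr (Sum.inr (Sum.inl (s, k))) : ListaIdx m n)
      + (Real.sqrt m)⁻¹ •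
          ∑ j, (w (Sum.inr (Sum.inr (Sum.inr (s, j)))) •
                  (deriv σ (t1val m n yv x0 w j) • lin1 m n yv x0 j)
            + σ (t1val m n yv x0 w j) •
                EuclideanSpace.proj (𝕜 := ℝ) (Sum.inr (Sum.inr (Sum.inr (s, j))) : ListaIdx m n))))

lemma lista_hasFDerivAt (m n : ℕ) (σ : ℝ → ℝ) (hσ : Differentiable ℝ σ)
    (yv : EuclideanSpace ℝ (Fin n)) (x0 : EuclideanSpace ℝ (Fin m)) (s : Fin m)
    (w : EuclideanSpace ℝ (ListaIdx m n)) :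
    HasFDerivAt (fun u => (Real.sqrt m)⁻¹ * σ (t2val m n σ yv x0 u s))
      (listaDeriv m n σ yv x0 s w) w := by
  have hproj : ∀ q : ListaIdx m n,
      HasFDerivAt (fun u : EuclideanSpace ℝ (ListaIdx m n) => u q)
        (EuclideanSpace.proj (𝕜 := ℝ) q) w :=
    fun q => (EuclideanSpace.proj (𝕜 := ℝ) q).hasFDerivAt
  have ht1 : ∀ j : Fin m,
      HasFDerivAt (fun u => t1val m n yv x0 u j) (lin1 m n yv x0 j) w := by
    intro j
    unfold t1val lin1
    exact (((HasFDerivAt.fun_sum (fun k _ => (hproj (Sum.inl (j, k))).mul_const (yv k))).const_mul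
        _).add
      ((HasFDerivAt.fun_sum (fun k _ => (hproj (Sum.inr (Sum.inl (j, k)))).mul_const (x0 k))).const_mul
        _))
  have hσt1 : ∀ j : Fin m,
      HasFDerivAt (fun u => σ (t1val m n yv x0 u j))
        (deriv σ (t1val m n yv x0 w j) • lin1 m n yv x0 j) w := by
    intro j
    exact ((hσ _).hasDerivAt).comp_hasFDerivAt w (ht1 j)
  have ht2 : HasFDerivAt (fun u => t2val m n σ yv x0 u s)
      ((Real.sqrt n)⁻¹ •
          ∑ k, yv k •
            EuclideanSpace.proj (𝕜 := ℝ) (Sum.inr (Sum.inr (Sum.inl (s, k))) : ListaIdx m n)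
        + (Real.sqrt m)⁻¹ •
            ∑ j, (w (Sum.inr (Sum.inr (Sum.inr (s, j)))) •
                    (deriv σ (t1val m n yv x0 w j) • lin1 m n yv x0 j)
              + σ (t1val m n yv x0 w j) •
                  EuclideanSpace.proj (𝕜 := ℝ)
                    (Sum.inr (Sum.inr (Sum.inr (s, j))) : ListaIdx m n))) w := by
    unfold t2val
    exact (((HasFDerivAt.fun_sum (fun k _ =>
        (hproj (Sum.inr (Sum.inr (Sum.inl (s, k))))).mul_const (yv k))).const_mul _).add
      ((HasFDerivAt.fun_sum (fun j _ =>
        (hproj (Sum.inr (Sum.inr (Sum.inr (s, j))))).mul (hσt1 j))).const_mul _))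
  unfold listaDeriv
  exact (((hσ _).hasDerivAt.comp_hasFDerivAt w ht2).const_mul _)

variable {σ : ℝ → ℝ} {yv : EuclideanSpace ℝ (Fin n)} {x0 : EuclideanSpace ℝ (Fin m)}
  {s : Fin m} {w : EuclideanSpace ℝ (ListaIdx m n)}

lemma sigma_lin_bound {σ : ℝ → ℝ} {L : ℝ} (hσ : Differentiable ℝ σ)
    (hσ' : ∀ a : ℝ, |deriv σ a| ≤ L) (hσ0 : σ 0 = 0) (t : ℝ) : |σ t| ≤ L * |t| := by
  have hlip : LipschitzWith (Real.toNNReal L) σ := by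
    apply lipschitzWith_of_nnnorm_deriv_le hσ
    intro x
    simpa [← NNReal.coe_le_coe, Real.norm_eq_abs, Real.coe_toNNReal',
      le_max_iff] using Or.inl (hσ' x)
  have := hlip.dist_le_mul t 0
  have hL0 : 0 ≤ L := le_trans (abs_nonneg _) (hσ' 0)
  simpa [Real.dist_eq, hσ0, Real.coe_toNNReal _ hL0] using this

lemma double_sum_factor {α β : Type*} [Fintype α] [Fintype β] (c : ℝ) (f : α → ℝ) (g : β → ℝ) :
    ∑ i : α, ∑ k : β, c * (f i * g k) = c * (∑ i, f i) * ∑ k, g k := by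
  calc ∑ i : α, ∑ k : β, c * (f i * g k) = ∑ i : α, (c * f i) * ∑ k, g k := by
        refine Finset.sum_congr rfl fun i _ => ?_
        rw [Finset.mul_sum]
        exact Finset.sum_congr rfl fun k _ => by ring
    _ = c * (∑ i, f i) * ∑ k, g k := by
        rw [← Finset.sum_mul, ← Finset.mul_sum]

lemma alg_bound {m n : ℕ} {cm an L d2 : ℝ} {W d1 t1 sg : Fin m → ℝ} {yv : Fin n → ℝ}
    {x0 : Fin m → ℝ}
    (hd2 : d2^2 ≤ L^2) (hd1 : ∀ i, (d1 i)^2 ≤ L^2)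
    (hsg : ∀ j, (sg j)^2 ≤ L^2 * (t1 j)^2) :
    (∑ i : Fin m, ∑ k : Fin n, (cm * d2 * (cm * (W i * d1 i * (an * yv k))))^2)
      + ((∑ i : Fin m, ∑ k : Fin m, (cm * d2 * (cm * (W i * d1 i * (cm * x0 k))))^2)
        + ((∑ k : Fin n, (cm * d2 * (an * yv k))^2)
          + ∑ j : Fin m, (cm * d2 * (cm * sg j))^2)) ≤
      (L * cm)^2 * (an^2 * (∑ k, (yv k)^2) + (L * cm)^2 * ∑ j, (t1 j)^2)
        + (L * cm)^4 * (an^2 * (∑ k, (yv k)^2) + cm^2 * ∑ k, (x0 k)^2) * ∑ j, (W j)^2 := by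
  have hT1 : ∑ i : Fin m, ∑ k : Fin n, (cm * d2 * (cm * (W i * d1 i * (an * yv k))))^2
      ≤ (L * cm)^4 * (an^2 * ∑ k, (yv k)^2) * ∑ j, (W j)^2 := by
    calc ∑ i : Fin m, ∑ k : Fin n, (cm * d2 * (cm * (W i * d1 i * (an * yv k))))^2
        ≤ ∑ i : Fin m, ∑ k : Fin n,
            (L^2 * L^2 * (cm^2 * cm^2 * an^2)) * ((W i)^2 * (yv k)^2) := by
          refine Finset.sum_le_sum fun i _ => Finset.sum_le_sum fun k _ => ?_
          have h4 : d2^2 * (d1 i)^2 ≤ L^2 * L^2 :=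
            mul_le_mul hd2 (hd1 i) (sq_nonneg _) (sq_nonneg _)
          calc (cm * d2 * (cm * (W i * d1 i * (an * yv k))))^2
              = (d2^2 * (d1 i)^2) * ((cm^2 * cm^2 * an^2) * ((W i)^2 * (yv k)^2)) := by ring
            _ ≤ (L^2 * L^2) * ((cm^2 * cm^2 * an^2) * ((W i)^2 * (yv k)^2)) :=
                mul_le_mul_of_nonneg_right h4 (by positivity)
            _ = (L^2 * L^2 * (cm^2 * cm^2 * an^2)) * ((W i)^2 * (yv k)^2) := by ring
      _ = (L^2 * L^2 * (cm^2 * cm^2 * an^2)) * (∑ i, (W i)^2) * ∑ k, (yv k)^2 :=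
          double_sum_factor _ _ _
      _ = (L * cm)^4 * (an^2 * ∑ k, (yv k)^2) * ∑ j, (W j)^2 := by ring
  have hT2 : ∑ i : Fin m, ∑ k : Fin m, (cm * d2 * (cm * (W i * d1 i * (cm * x0 k))))^2
      ≤ (L * cm)^4 * (cm^2 * ∑ k, (x0 k)^2) * ∑ j, (W j)^2 := by
    calc ∑ i : Fin m, ∑ k : Fin m, (cm * d2 * (cm * (W i * d1 i * (cm * x0 k))))^2
        ≤ ∑ i : Fin m, ∑ k : Fin m,
            (L^2 * L^2 * (cm^2 * cm^2 * cm^2)) * ((W i)^2 * (x0 k)^2) := by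
          refine Finset.sum_le_sum fun i _ => Finset.sum_le_sum fun k _ => ?_
          have h4 : d2^2 * (d1 i)^2 ≤ L^2 * L^2 :=
            mul_le_mul hd2 (hd1 i) (sq_nonneg _) (sq_nonneg _)
          calc (cm * d2 * (cm * (W i * d1 i * (cm * x0 k))))^2
              = (d2^2 * (d1 i)^2) * ((cm^2 * cm^2 * cm^2) * ((W i)^2 * (x0 k)^2)) := by ring
            _ ≤ (L^2 * L^2) * ((cm^2 * cm^2 * cm^2) * ((W i)^2 * (x0 k)^2)) :=
                mul_le_mul_of_nonneg_right h4 (by positivity)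
            _ = (L^2 * L^2 * (cm^2 * cm^2 * cm^2)) * ((W i)^2 * (x0 k)^2) := by ring
      _ = (L^2 * L^2 * (cm^2 * cm^2 * cm^2)) * (∑ i, (W i)^2) * ∑ k, (x0 k)^2 :=
          double_sum_factor _ _ _
      _ = (L * cm)^4 * (cm^2 * ∑ k, (x0 k)^2) * ∑ j, (W j)^2 := by ring
  have hT3 : ∑ k : Fin n, (cm * d2 * (an * yv k))^2
      ≤ (L * cm)^2 * (an^2 * ∑ k, (yv k)^2) := by
    calc ∑ k : Fin n, (cm * d2 * (an * yv k))^2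
        ≤ ∑ k : Fin n, (L^2 * (cm^2 * an^2)) * (yv k)^2 := by
          refine Finset.sum_le_sum fun k _ => ?_
          calc (cm * d2 * (an * yv k))^2 = d2^2 * ((cm^2 * an^2) * (yv k)^2) := by ring
            _ ≤ L^2 * ((cm^2 * an^2) * (yv k)^2) :=
                mul_le_mul_of_nonneg_right hd2 (by positivity)
            _ = (L^2 * (cm^2 * an^2)) * (yv k)^2 := by ring
      _ = (L^2 * (cm^2 * an^2)) * ∑ k, (yv k)^2 := by rw [← Finset.mul_sum]
      _ = (L * cm)^2 * (an^2 * ∑ k, (yv k)^2) := by ring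
  have hT4 : ∑ j : Fin m, (cm * d2 * (cm * sg j))^2
      ≤ (L * cm)^2 * ((L * cm)^2 * ∑ j, (t1 j)^2) := by
    calc ∑ j : Fin m, (cm * d2 * (cm * sg j))^2
        ≤ ∑ j : Fin m, (L^2 * L^2 * (cm^2 * cm^2)) * (t1 j)^2 := by
          refine Finset.sum_le_sum fun j _ => ?_
          calc (cm * d2 * (cm * sg j))^2 = d2^2 * ((cm^2 * cm^2) * (sg j)^2) := by ring
            _ ≤ L^2 * ((cm^2 * cm^2) * (sg j)^2) :=
                mul_le_mul_of_nonneg_right hd2 (by positivity)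
            _ ≤ L^2 * ((cm^2 * cm^2) * (L^2 * (t1 j)^2)) := by
                refine mul_le_mul_of_nonneg_left ?_ (sq_nonneg L)
                exact mul_le_mul_of_nonneg_left (hsg j) (by positivity)
            _ = (L^2 * L^2 * (cm^2 * cm^2)) * (t1 j)^2 := by ring
      _ = (L^2 * L^2 * (cm^2 * cm^2)) * ∑ j, (t1 j)^2 := by rw [← Finset.mul_sum]
      _ = (L * cm)^2 * ((L * cm)^2 * ∑ j, (t1 j)^2) := by ring
  calc _ ≤ ((L * cm)^4 * (an^2 * ∑ k, (yv k)^2) * ∑ j, (W j)^2)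
      + (((L * cm)^4 * (cm^2 * ∑ k, (x0 k)^2) * ∑ j, (W j)^2)
        + (((L * cm)^2 * (an^2 * ∑ k, (yv k)^2))
          + (L * cm)^2 * ((L * cm)^2 * ∑ j, (t1 j)^2))) :=
      add_le_add hT1 (add_le_add hT2 (add_le_add hT3 hT4))
    _ = _ := by ring

lemma eval1 (i : Fin m) (k : Fin n) :
    listaDeriv m n σ yv x0 s w (EuclideanSpace.single (Sum.inl (i, k) : ListaIdx m n) 1) =
      (Real.sqrt m)⁻¹ * deriv σ (t2val m n σ yv x0 w s) * ((Real.sqrt m)⁻¹ *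
        (w (Sum.inr (Sum.inr (Sum.inr (s, i)))) * deriv σ (t1val m n yv x0 w i) *
          ((Real.sqrt n)⁻¹ * yv k))) := by
  unfold listaDeriv lin1
  simp [ContinuousLinearMap.sum_apply, EuclideanSpace.single_apply, Finset.mul_sum,
    ite_and, Finset.sum_ite_eq', mul_assoc]

lemma eval2 (i k : Fin m) :
    listaDeriv m n σ yv x0 s w
        (EuclideanSpace.single (Sum.inr (Sum.inl (i, k)) : ListaIdx m n) 1) =
      (Real.sqrt m)⁻¹ * deriv σ (t2val m n σ yv x0 w s) * ((Real.sqrt m)⁻¹ *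
        (w (Sum.inr (Sum.inr (Sum.inr (s, i)))) * deriv σ (t1val m n yv x0 w i) *
          ((Real.sqrt m)⁻¹ * x0 k))) := by
  unfold listaDeriv lin1
  simp [ContinuousLinearMap.sum_apply, EuclideanSpace.single_apply, Finset.mul_sum,
    ite_and, Finset.sum_ite_eq', mul_assoc]

lemma eval3 (i : Fin m) (k : Fin n) :
    listaDeriv m n σ yv x0 s w
        (EuclideanSpace.single (Sum.inr (Sum.inr (Sum.inl (i, k))) : ListaIdx m n) 1) =
      if i = s then
        (Real.sqrt m)⁻¹ * deriv σ (t2val m n σ yv x0 w s) * ((Real.sqrt n)⁻¹ * yv k)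
      else 0 := by
  unfold listaDeriv lin1
  simp [ContinuousLinearMap.sum_apply, EuclideanSpace.single_apply, Finset.mul_sum,
    ite_and, Finset.sum_ite_eq', mul_assoc, eq_comm (a := i) (b := s)]

lemma eval4 (i j : Fin m) :
    listaDeriv m n σ yv x0 s w
        (EuclideanSpace.single (Sum.inr (Sum.inr (Sum.inr (i, j))) : ListaIdx m n) 1) =
      if i = s then
        (Real.sqrt m)⁻¹ * deriv σ (t2val m n σ yv x0 w s) *
          ((Real.sqrt m)⁻¹ * σ (t1val m n yv x0 w j))
      else 0 := by
  unfold listaDeriv lin1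
  simp [ContinuousLinearMap.sum_apply, EuclideanSpace.single_apply, Finset.mul_sum,
    ite_and, Finset.sum_ite_eq', mul_assoc, eq_comm (a := i) (b := s)]

lemma core_bound (L : ℝ)
    (hσ : Differentiable ℝ σ) (hσ' : ∀ a : ℝ, |deriv σ a| ≤ L) (hσ0 : σ 0 = 0) :
    ∑ p : ListaIdx m n, (listaDeriv m n σ yv x0 s w (EuclideanSpace.single p 1))^2 ≤
      (L * (Real.sqrt m)⁻¹)^2 * (((Real.sqrt n)⁻¹)^2 * (∑ k, (yv k)^2)
          + (L * (Real.sqrt m)⁻¹)^2 * ∑ j, (t1val m n yv x0 w j)^2)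
        + (L * (Real.sqrt m)⁻¹)^4 *
            (((Real.sqrt n)⁻¹)^2 * (∑ k, (yv k)^2) + ((Real.sqrt m)⁻¹)^2 * ∑ k, (x0 k)^2) *
            ∑ j, (w (Sum.inr (Sum.inr (Sum.inr (s, j)))))^2 := by
  have hL2 : ∀ a, (deriv σ a)^2 ≤ L^2 := fun a => by
    have h := hσ' a
    calc (deriv σ a)^2 = |deriv σ a|^2 := (sq_abs _).symm
      _ ≤ L^2 := pow_le_pow_left₀ (abs_nonneg _) h 2
  have hs1 : ∀ j, (σ (t1val m n yv x0 w j))^2 ≤ L^2 * (t1val m n yv x0 w j)^2 := by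
    intro j
    have h := sigma_lin_bound hσ hσ' hσ0 (t1val m n yv x0 w j)
    calc (σ (t1val m n yv x0 w j))^2 = |σ (t1val m n yv x0 w j)|^2 := (sq_abs _).symm
      _ ≤ (L * |t1val m n yv x0 w j|)^2 := pow_le_pow_left₀ (abs_nonneg _) h 2
      _ = L^2 * (t1val m n yv x0 w j)^2 := by rw [mul_pow, sq_abs]
  rw [Fintype.sum_sum_type, Fintype.sum_sum_type, Fintype.sum_sum_type,
    Fintype.sum_prod_type, Fintype.sum_prod_type, Fintype.sum_prod_type, Fintype.sum_prod_type]
  simp only [eval1, eval2, eval3, eval4]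
  have hc3 : ∑ i : Fin m, ∑ k : Fin n,
      (if i = s then (Real.sqrt m)⁻¹ * deriv σ (t2val m n σ yv x0 w s) *
        ((Real.sqrt n)⁻¹ * yv k) else 0)^2
      = ∑ k : Fin n, ((Real.sqrt m)⁻¹ * deriv σ (t2val m n σ yv x0 w s) *
          ((Real.sqrt n)⁻¹ * yv k))^2 := by
    rw [Finset.sum_comm]
    refine Finset.sum_congr rfl fun k _ => ?_
    simp [apply_ite (fun x : ℝ => x^2), Finset.sum_ite_eq']
  have hc4 : ∑ i : Fin m, ∑ j : Fin m,
      (if i = s then (Real.sqrt m)⁻¹ * deriv σ (t2val m n σ yv x0 w s) *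
        ((Real.sqrt m)⁻¹ * σ (t1val m n yv x0 w j)) else 0)^2
      = ∑ j : Fin m, ((Real.sqrt m)⁻¹ * deriv σ (t2val m n σ yv x0 w s) *
          ((Real.sqrt m)⁻¹ * σ (t1val m n yv x0 w j)))^2 := by
    rw [Finset.sum_comm]
    refine Finset.sum_congr rfl fun j _ => ?_
    simp [apply_ite (fun x : ℝ => x^2), Finset.sum_ite_eq']
  rw [hc3, hc4]
  exact alg_bound (hL2 _) (fun i => hL2 _) hs1

lemma eucl_norm_sq {ι : Type*} [Fintype ι] (v : EuclideanSpace ℝ ι) :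
    ‖v‖^2 = ∑ i, (v i)^2 := by
  rw [EuclideanSpace.norm_eq, Real.sq_sqrt (by positivity)]
  simp [Real.norm_eq_abs, sq_abs]

lemma grad_sq (hσ : Differentiable ℝ σ) :
    ‖gradient (fun u => (Real.sqrt m)⁻¹ * σ (t2val m n σ yv x0 u s)) w‖^2
      = ∑ p : ListaIdx m n, (listaDeriv m n σ yv x0 s w (EuclideanSpace.single p 1))^2 := by
  have hD := lista_hasFDerivAt m n σ hσ yv x0 s w
  have hgrad : gradient (fun u => (Real.sqrt m)⁻¹ * σ (t2val m n σ yv x0 u s)) w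
      = (InnerProductSpace.toDual ℝ _).symm (listaDeriv m n σ yv x0 s w) := by
    rw [gradient, hD.fderiv]
  have hcoord : ∀ p : ListaIdx m n,
      gradient (fun u => (Real.sqrt m)⁻¹ * σ (t2val m n σ yv x0 u s)) w p
        = listaDeriv m n σ yv x0 s w (EuclideanSpace.single p 1) := by
    intro p
    rw [hgrad]
    have h := InnerProductSpace.toDual_symm_apply (𝕜 := ℝ)
      (y := (listaDeriv m n σ yv x0 s w : StrongDual ℝ (EuclideanSpace ℝ (ListaIdx m n))))
      (x := EuclideanSpace.single p 1)
    rw [← h, PiLp.inner_apply]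
    simp [EuclideanSpace.single_apply]
  rw [eucl_norm_sq]
  exact Finset.sum_congr rfl fun p _ => by rw [hcoord p]

lemma F_hasFDerivAt {T : ℕ} (Y : Fin T → EuclideanSpace ℝ (Fin n)) (hσ : Differentiable ℝ σ)
    (F : EuclideanSpace ℝ (ListaIdx m n) → EuclideanSpace ℝ (Fin m × Fin T))
    (hF : F = fun u => WithLp.toLp 2 fun ai => (Real.sqrt m)⁻¹ * σ (t2val m n σ (Y ai.2) x0 u ai.1)) :
    HasFDerivAt F
      ((((PiLp.continuousLinearEquiv 2 ℝ (fun _ : Fin m × Fin T => ℝ)).symm :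
          ((Fin m × Fin T) → ℝ) ≃L[ℝ] EuclideanSpace ℝ (Fin m × Fin T)) :
            ((Fin m × Fin T) → ℝ) →L[ℝ] EuclideanSpace ℝ (Fin m × Fin T)).comp
        (ContinuousLinearMap.pi fun ai => listaDeriv m n σ (Y ai.2) x0 ai.1 w)) w := by
  have hG : HasFDerivAt (𝕜 := ℝ)
      (fun (u : EuclideanSpace ℝ (ListaIdx m n)) (ai : Fin m × Fin T) =>
        (Real.sqrt m)⁻¹ * σ (t2val m n σ (Y ai.2) x0 u ai.1))
      (ContinuousLinearMap.pi fun ai => listaDeriv m n σ (Y ai.2) x0 ai.1 w) w := by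
    apply hasFDerivAt_pi''
    intro ai
    rw [ContinuousLinearMap.proj_pi]
    exact lista_hasFDerivAt m n σ hσ (Y ai.2) x0 ai.1 w
  subst hF
  exact ((PiLp.continuousLinearEquiv 2 ℝ
    (fun _ : Fin m × Fin T => ℝ)).symm).comp_hasFDerivAt_iff.mpr hG

/-- For the two-layer LISTA network with output coordinate
`f_s = (1/√m) σ(x̃²_s)`, `|σ'| ≤ L_σ`, `σ(0) = 0`, writing `L̂ = L_σ/√m`,
`ŷ = ‖y‖²/n`, `x̂ = ‖x⁰‖²/m`, the squared gradient norm satisfies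
`‖∇_w f_s‖² ≤ L̂²(ŷ + L̂²‖x̃¹‖²) + L̂⁴(ŷ + x̂)‖v_sᵀW₂²‖²`; consequently, for `T`
training samples containing `y` as the first input, the minimum eigenvalue of
the tangent kernel matrix is bounded above by the same quantity. -/
theorem two_layer_lista_gradient_and_min_eigenvalue_bound
    (m n T : ℕ) (hm : 0 < m) (hn : 0 < n) (hT : 0 < T)
    (σ : ℝ → ℝ) (L_σ : ℝ)
    (hσ : Differentiable ℝ σ) (hσ' : ∀ a : ℝ, |deriv σ a| ≤ L_σ)
    (hσ0 : σ 0 = 0)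
    (y : EuclideanSpace ℝ (Fin n)) (x0 : EuclideanSpace ℝ (Fin m)) (s : Fin m)
    (xt1 : EuclideanSpace ℝ (ListaIdx m n) → EuclideanSpace ℝ (Fin n) →
      EuclideanSpace ℝ (Fin m))
    (hxt1 : xt1 = fun w yv => WithLp.toLp 2 fun i =>
      (Real.sqrt n)⁻¹ * ∑ j, w (Sum.inl (i, j)) * yv j
        + (Real.sqrt m)⁻¹ * ∑ j, w (Sum.inr (Sum.inl (i, j))) * x0 j)
    (xt2 : EuclideanSpace ℝ (ListaIdx m n) → EuclideanSpace ℝ (Fin n) →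
      EuclideanSpace ℝ (Fin m))
    (hxt2 : xt2 = fun w yv => WithLp.toLp 2 fun i =>
      (Real.sqrt n)⁻¹ * ∑ j, w (Sum.inr (Sum.inr (Sum.inl (i, j)))) * yv j
        + (Real.sqrt m)⁻¹ *
            ∑ j, w (Sum.inr (Sum.inr (Sum.inr (i, j)))) * σ (xt1 w yv j))
    (w : EuclideanSpace ℝ (ListaIdx m n))
    (Y : Fin T → EuclideanSpace ℝ (Fin n)) (hY : Y ⟨0, hT⟩ = y)
    (F : EuclideanSpace ℝ (ListaIdx m n) → EuclideanSpace ℝ (Fin m × Fin T))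
    (hF : F = fun u => WithLp.toLp 2 fun ai => (Real.sqrt m)⁻¹ * σ (xt2 u (Y ai.2) ai.1))
    (hherm : ∀ u, (tangentKernel F u).IsHermitian) :
    ‖gradient (fun u => (Real.sqrt m)⁻¹ * σ (xt2 u y s)) w‖ ^ 2 ≤
      (L_σ / Real.sqrt m) ^ 2 *
          (‖y‖ ^ 2 / n + (L_σ / Real.sqrt m) ^ 2 * ‖xt1 w y‖ ^ 2)
        + (L_σ / Real.sqrt m) ^ 4 * (‖y‖ ^ 2 / n + ‖x0‖ ^ 2 / m) *
            (∑ j, w (Sum.inr (Sum.inr (Sum.inr (s, j)))) ^ 2) ∧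
    ⨅ a : Fin m × Fin T, (hherm w).eigenvalues a ≤
      (L_σ / Real.sqrt m) ^ 2 *
          (‖y‖ ^ 2 / n + (L_σ / Real.sqrt m) ^ 2 * ‖xt1 w y‖ ^ 2)
        + (L_σ / Real.sqrt m) ^ 4 * (‖y‖ ^ 2 / n + ‖x0‖ ^ 2 / m) *
            (∑ j, w (Sum.inr (Sum.inr (Sum.inr (s, j)))) ^ 2) := by
  haveI : Nonempty (Fin m) := ⟨⟨0, hm⟩⟩
  haveI : Nonempty (Fin T) := ⟨⟨0, hT⟩⟩
  haveI : Nonempty (Fin m × Fin T) := ⟨(s, ⟨0, hT⟩)⟩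
  -- identify the network functions with `t1val`/`t2val`
  have hfun : ∀ yv : EuclideanSpace ℝ (Fin n), ∀ i : Fin m,
      (fun u => (Real.sqrt m)⁻¹ * σ (xt2 u yv i))
        = fun u => (Real.sqrt m)⁻¹ * σ (t2val m n σ yv x0 u i) := by
    intro yv i
    funext u
    rw [hxt2]
    simp only [hxt1, t2val, t1val, WithLp.ofLp_toLp]
  have hx1norm : ‖xt1 w y‖^2 = ∑ j, (t1val m n y x0 w j)^2 := by
    rw [eucl_norm_sq]
    refine Finset.sum_congr rfl fun j _ => ?_
    rw [hxt1]
    rfl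
  have hLc : L_σ / Real.sqrt m = L_σ * (Real.sqrt m)⁻¹ := div_eq_mul_inv _ _
  have hyn : ‖y‖^2 / (n : ℝ) = ((Real.sqrt n)⁻¹)^2 * ∑ k, (y k)^2 := by
    rw [eucl_norm_sq, inv_pow, Real.sq_sqrt (Nat.cast_nonneg n), div_eq_mul_inv, mul_comm]
  have hxm : ‖x0‖^2 / (m : ℝ) = ((Real.sqrt m)⁻¹)^2 * ∑ k, (x0 k)^2 := by
    rw [eucl_norm_sq, inv_pow, Real.sq_sqrt (Nat.cast_nonneg m), div_eq_mul_inv, mul_comm]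
  have hbound := core_bound (yv := y) (x0 := x0) (s := s) (w := w) L_σ hσ hσ' hσ0
  constructor
  · rw [hfun y s, grad_sq hσ, hLc, hyn, hxm, hx1norm]
    exact hbound
  · have hFfun : F = fun u => WithLp.toLp 2 fun ai : Fin m × Fin T =>
        (Real.sqrt m)⁻¹ * σ (t2val m n σ (Y ai.2) x0 u ai.1) := by
      rw [hF]
      funext u; congr 1; funext ai
      rw [hxt2]
      simp only [hxt1, t2val, t1val, WithLp.ofLp_toLp]
    have hFd := F_hasFDerivAt (x0 := x0) (w := w) Y hσ F hFfun
    have h1 : ⨅ a : Fin m × Fin T, (hherm w).eigenvalues a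
        ≤ tangentKernel F w (s, ⟨0, hT⟩) (s, ⟨0, hT⟩) :=
      inf_eig_le_diag (hherm w) _
    have hK : tangentKernel F w (s, ⟨0, hT⟩) (s, ⟨0, hT⟩)
        = ∑ p : ListaIdx m n,
            ((fderiv ℝ F w (EuclideanSpace.single p 1)) (s, ⟨0, hT⟩))^2 := by
      simp [tangentKernel, Matrix.mul_apply, sq]
    have happ : ∀ p : ListaIdx m n,
        (fderiv ℝ F w (EuclideanSpace.single p 1)) (s, ⟨0, hT⟩)
          = listaDeriv m n σ y x0 s w (EuclideanSpace.single p 1) := by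
      intro p
      rw [hFd.fderiv, ← hY]
      rfl
    calc ⨅ a : Fin m × Fin T, (hherm w).eigenvalues a
        ≤ tangentKernel F w (s, ⟨0, hT⟩) (s, ⟨0, hT⟩) := h1
      _ = ∑ p : ListaIdx m n,
            (listaDeriv m n σ y x0 s w (EuclideanSpace.single p 1))^2 := by
          rw [hK]
          exact Finset.sum_congr rfl fun p _ => by rw [happ p]
      _ ≤ _ := by
          rw [hLc, hyn, hxm, hx1norm]
          exact hbound
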